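/- Fix a real Δ > 3, an integer 0 ≤ i ≤ k−1, and vertices x, y ∈ V with d_G(x, y) ≥ (3Δ)^i · W(x, y). Then at least one of the following holds: (1) d_H(x, y) ≤ (1 + 4i/(Δ−3)) · d_G(x, y); or (2) A_{i+1} ≠ ∅ and d_H(x, p_{i+1}(x)) ≤ (Δ/(Δ−3)) · d_G(x, y). -/

import Mathlib

open scoped ENNReal Classical

namespace ASP

variable {V : Type*}

noncomputable def wWeight {G : SimpleGraph V} (w : V → V → ℝ≥0∞) {x y : V}
    (p : G.Walk x y) : ℝ≥0∞ :=
  (p.darts.map fun d => w d.toProd.1 d.toProd.2).sum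

noncomputable def gdist (G : SimpleGraph V) (w : V → V → ℝ≥0∞) (x y : V) : ℝ≥0∞ :=
  ⨅ p : G.Walk x y, wWeight w p

noncomputable def maxW {G : SimpleGraph V} (w : V → V → ℝ≥0∞) {x y : V}
    (p : G.Walk x y) : ℝ≥0∞ :=
  (p.darts.map fun d => w d.toProd.1 d.toProd.2).foldr max 0

section generic

variable {G : SimpleGraph V} {w : V → V → ℝ≥0∞} {x y z : V}

lemma wWeight_nil : wWeight w (SimpleGraph.Walk.nil : G.Walk x x) = 0 := rfl

lemma wWeight_cons (h : G.Adj x y) (p : G.Walk y z) :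
    wWeight w (p.cons h) = w x y + wWeight w p := by
  simp [wWeight]

lemma wWeight_append (p : G.Walk x y) (q : G.Walk y z) :
    wWeight w (p.append q) = wWeight w p + wWeight w q := by
  simp [wWeight, SimpleGraph.Walk.darts_append]

lemma wWeight_copy (p : G.Walk x y) {x' y'} (hx : x = x') (hy : y = y') :
    wWeight w (p.copy hx hy) = wWeight w p := by
  subst hx; subst hy; rfl

lemma gdist_le (p : G.Walk x y) : gdist G w x y ≤ wWeight w p := iInf_le _ p

lemma gdist_self : gdist G w x x = 0 :=
  le_antisymm ((gdist_le SimpleGraph.Walk.nil).trans_eq wWeight_nil) (zero_le)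

lemma gdist_le_w (h : G.Adj x y) : gdist G w x y ≤ w x y := by
  refine (gdist_le (SimpleGraph.Walk.cons h SimpleGraph.Walk.nil)).trans_eq ?_
  rw [wWeight_cons, wWeight_nil, add_zero]

lemma gdist_triangle : gdist G w x z ≤ gdist G w x y + gdist G w y z := by
  show gdist G w x z ≤ (⨅ p : G.Walk x y, wWeight w p) + ⨅ q : G.Walk y z, wWeight w q
  rw [ENNReal.iInf_add]
  refine le_iInf fun p => ?_
  rw [ENNReal.add_iInf]
  refine le_iInf fun q => ?_
  exact (gdist_le (p.append q)).trans_eq (wWeight_append p q)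

lemma wWeight_reverse (hsym : ∀ u v, G.Adj u v → w u v = w v u) (p : G.Walk x y) :
    wWeight w p.reverse = wWeight w p := by
  induction p with
  | nil => rfl
  | cons h q ih =>
    rw [SimpleGraph.Walk.reverse_cons, wWeight_append, wWeight_cons, ih, wWeight_cons,
      wWeight_nil, add_zero, hsym _ _ h, add_comm]

lemma gdist_symm (hsym : ∀ u v, G.Adj u v → w u v = w v u) :
    gdist G w x y = gdist G w y x := by
  have key : ∀ a b : V, gdist G w a b ≤ gdist G w b a := by
    intro a b
    refine le_iInf fun p => ?_
    exact (gdist_le p.reverse).trans_eq (wWeight_reverse hsym p)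
  exact le_antisymm (key x y) (key y x)

lemma wWeight_lt_top (hfin : ∀ u v, G.Adj u v → w u v ≠ ⊤) (p : G.Walk x y) :
    wWeight w p < ⊤ := by
  induction p with
  | nil => simp [wWeight_nil]
  | cons h q ih =>
    rw [wWeight_cons]
    exact ENNReal.add_lt_top.2 ⟨(hfin _ _ h).lt_top, ih⟩

lemma gdist_lt_top (hconn : G.Connected) (hfin : ∀ u v, G.Adj u v → w u v ≠ ⊤) :
    gdist G w x y < ⊤ := by
  obtain ⟨p⟩ := hconn.preconnected x y
  exact (gdist_le p).trans_lt (wWeight_lt_top hfin p)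

lemma le_foldr_max {a : ℝ≥0∞} : ∀ {l : List ℝ≥0∞}, a ∈ l → a ≤ l.foldr max 0
  | b :: l, h => by
    rcases List.mem_cons.1 h with rfl | h
    · exact le_max_left _ _
    · exact (le_foldr_max h).trans (le_max_right _ _)

lemma le_maxW {d : G.Dart} (p : G.Walk x y) (hd : d ∈ p.darts) :
    w d.toProd.1 d.toProd.2 ≤ maxW w p :=
  le_foldr_max (List.mem_map_of_mem hd)

lemma maxW_le_of_forall {b : ℝ≥0∞} (p : G.Walk x y)
    (h : ∀ d ∈ p.darts, w d.toProd.1 d.toProd.2 ≤ b) : maxW w p ≤ b := by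
  unfold maxW
  induction p with
  | nil => simp
  | cons ha q ih =>
    simp only [SimpleGraph.Walk.darts_cons, List.map_cons, List.foldr_cons]
    refine max_le (h _ (List.mem_cons_self)) (ih fun d hd => h d (List.mem_cons_of_mem _ hd))

lemma maxW_le_wWeight (p : G.Walk x y) : maxW w p ≤ wWeight w p := by
  unfold maxW wWeight
  induction p with
  | nil => simp
  | cons ha q ih =>
    simp only [SimpleGraph.Walk.darts_cons, List.map_cons, List.foldr_cons, List.sum_cons]
    exact max_le le_self_add (ih.trans le_add_self)

end generic

section slicing

variable {G : SimpleGraph V} {w : V → V → ℝ≥0∞} {x y : V}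

def wtake : ∀ {x y : V} (p : G.Walk x y) (t : ℕ), G.Walk x (p.getVert t)
  | _, _, .nil, _ => .nil
  | _, _, .cons _ _, 0 => .nil
  | _, _, .cons h q, t+1 => .cons h (wtake q t)

def wdrop : ∀ {x y : V} (p : G.Walk x y) (t : ℕ), G.Walk (p.getVert t) y
  | _, _, .nil, _ => .nil
  | _, _, .cons h q, 0 => .cons h q
  | _, _, .cons _ q, t+1 => wdrop q t

lemma darts_wtake : ∀ {x y : V} (p : G.Walk x y) (t : ℕ),
    (wtake p t).darts = p.darts.take t
  | _, _, .nil, t => by simp [wtake]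
  | _, _, .cons _ _, 0 => by simp [wtake]; rfl
  | _, _, .cons h q, t+1 => by
    simp [wtake, darts_wtake q t]

lemma darts_wdrop : ∀ {x y : V} (p : G.Walk x y) (t : ℕ),
    (wdrop p t).darts = p.darts.drop t
  | _, _, .nil, t => by simp [wdrop]
  | _, _, .cons _ _, 0 => by simp [wdrop]; rfl
  | _, _, .cons h q, t+1 => by
    simp [wdrop, darts_wdrop q t]

lemma getVert_wdrop : ∀ {x y : V} (p : G.Walk x y) (s t : ℕ),
    (wdrop p s).getVert t = p.getVert (s + t)
  | _, _, .nil, s, t => by simp [wdrop, SimpleGraph.Walk.getVert]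
  | _, _, .cons _ _, 0, t => by simp [wdrop]; rfl
  | _, _, .cons h q, s+1, t => by
    show (wdrop q s).getVert t = (SimpleGraph.Walk.cons h q).getVert (s+1+t)
    rw [show s+1+t = (s+t)+1 from by omega, SimpleGraph.Walk.getVert_cons_succ]
    exact getVert_wdrop q s t

lemma support_wtake : ∀ {x y : V} (p : G.Walk x y) (t : ℕ),
    (wtake p t).support = p.support.take (t+1)
  | _, _, .nil, t => by simp [wtake]
  | _, _, .cons _ _, 0 => by simp [wtake]; rfl
  | _, _, .cons h q, t+1 => by
    simp [wtake, support_wtake q t]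

lemma isPath_wtake {p : G.Walk x y} (hp : p.IsPath) (t : ℕ) : (wtake p t).IsPath := by
  rw [SimpleGraph.Walk.isPath_def, support_wtake]
  exact (SimpleGraph.Walk.isPath_def _ |>.1 hp).sublist (List.take_sublist _ _)

lemma isPath_wdrop : ∀ {x y : V} {p : G.Walk x y}, p.IsPath → ∀ (t : ℕ), (wdrop p t).IsPath
  | _, _, .nil, hp, t => hp
  | _, _, .cons _ _, hp, 0 => hp
  | _, _, .cons h q, hp, t+1 => isPath_wdrop hp.of_cons t

def wsub (p : G.Walk x y) {s t : ℕ} (h : s ≤ t) : G.Walk (p.getVert s) (p.getVert t) :=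
  (wtake (wdrop p s) (t - s)).copy rfl (by rw [getVert_wdrop, Nat.add_sub_cancel' h])

lemma darts_wsub (p : G.Walk x y) {s t : ℕ} (h : s ≤ t) :
    (wsub p h).darts = (p.darts.drop s).take (t - s) := by
  simp [wsub, darts_wtake, darts_wdrop]

lemma isPath_wsub {p : G.Walk x y} (hp : p.IsPath) {s t : ℕ} (h : s ≤ t) :
    (wsub p h).IsPath := by
  simpa [wsub] using isPath_wtake (isPath_wdrop hp s) (t - s)

lemma wWeight_darts (p : G.Walk x y) :
    wWeight w p = (p.darts.map fun d => w d.toProd.1 d.toProd.2).sum := rfl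

lemma maxW_wsub_le (p : G.Walk x y) {s t : ℕ} (h : s ≤ t) :
    maxW w (wsub p h) ≤ maxW w p := by
  refine maxW_le_of_forall _ fun d hd => le_maxW p ?_
  rw [darts_wsub] at hd
  exact List.mem_of_mem_drop (List.mem_of_mem_take hd)

lemma maxW_reverse_le (hsym : ∀ u v, G.Adj u v → w u v = w v u) (p : G.Walk x y) :
    maxW w p.reverse ≤ maxW w p := by
  refine maxW_le_of_forall _ fun d hd => ?_
  rw [SimpleGraph.Walk.mem_darts_reverse] at hd
  have h2 := le_maxW (w := w) p hd
  rw [hsym _ _ d.adj]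
  simpa [SimpleGraph.Dart.symm_toProd] using h2

lemma wWeight_wsub_add (p : G.Walk x y) {s t r : ℕ} (hst : s ≤ t) (htr : t ≤ r) :
    wWeight w (wsub p hst) + wWeight w (wsub p htr) = wWeight w (wsub p (hst.trans htr)) := by
  rw [wWeight_darts, wWeight_darts, wWeight_darts, darts_wsub, darts_wsub, darts_wsub,
    ← List.sum_append, ← List.map_append]
  congr 1
  have h1 : p.darts.drop t = (p.darts.drop s).drop (t - s) := by
    rw [List.drop_drop]
    congr 1
    omega
  have h2 : r - s = (t - s) + (r - t) := by omega
  rw [h2, List.take_add, h1]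

lemma wWeight_split3 (p : G.Walk x y) {s t : ℕ} (hst : s ≤ t) :
    wWeight w p = wWeight w (wtake p s) + wWeight w (wsub p hst) + wWeight w (wdrop p t) := by
  rw [wWeight_darts, wWeight_darts, wWeight_darts, wWeight_darts, darts_wtake, darts_wsub,
    darts_wdrop, ← List.sum_append, ← List.sum_append, ← List.map_append, ← List.map_append]
  congr 2
  have h1 : p.darts.drop t = (p.darts.drop s).drop (t - s) := by
    rw [List.drop_drop]
    congr 1
    omega
  rw [h1, List.append_assoc, List.take_append_drop, List.take_append_drop]

/-- On a shortest walk, the subwalk between positions `s ≤ t` is itself shortest. -/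
lemma gdist_wsub {q : G.Walk x y} (hq : wWeight w q = gdist G w x y)
    (hfin : gdist G w x y ≠ ⊤) {s t : ℕ} (hst : s ≤ t) :
    gdist G w (q.getVert s) (q.getVert t) = wWeight w (wsub q hst) := by
  set a := wWeight w (wtake q s) with ha
  set b := wWeight w (wsub q hst) with hb
  set c := wWeight w (wdrop q t) with hc
  have habc : a + b + c = gdist G w x y := by rw [← hq]; exact (wWeight_split3 q hst).symm
  have ga : gdist G w x (q.getVert s) ≤ a := gdist_le _
  have gb : gdist G w (q.getVert s) (q.getVert t) ≤ b := gdist_le _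
  have gc : gdist G w (q.getVert t) y ≤ c := gdist_le _
  have tri : gdist G w x y ≤
      gdist G w x (q.getVert s) + gdist G w (q.getVert s) (q.getVert t) +
        gdist G w (q.getVert t) y :=
    le_trans gdist_triangle (add_le_add_left gdist_triangle _)
  have hna : a ≠ ⊤ := by
    intro h; apply hfin; rw [← habc, h]; simp
  have hnc : c ≠ ⊤ := by
    intro h; apply hfin; rw [← habc, h]; simp
  refine le_antisymm gb ?_
  have key : a + b + c ≤ a + gdist G w (q.getVert s) (q.getVert t) + c := by
    calc a + b + c = gdist G w x y := habc
    _ ≤ _ := tri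
    _ ≤ a + gdist G w (q.getVert s) (q.getVert t) + c :=
        add_le_add (add_le_add ga le_rfl) gc
  have key2 : a + b ≤ a + gdist G w (q.getVert s) (q.getVert t) :=
    ENNReal.le_of_add_le_add_right hnc key
  exact ENNReal.le_of_add_le_add_left hna key2

end slicing


/-- The bunch of a vertex `u` of level `i`: all vertices of `A i` strictly closer to `u` than
`A (i+1)` (vacuously all of `A i` if `A (i+1) = ∅`), together with the pivots of all
nonempty higher levels. -/
def bunch (G : SimpleGraph V) (w : V → V → ℝ≥0∞) (A : ℕ → Set V) (pv : ℕ → V → V)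
    (k i : ℕ) (u : V) : Set V :=
  {v | v ∈ A i ∧ ∀ a ∈ A (i + 1), gdist G w u v < gdist G w u a} ∪
    {v | ∃ j, i < j ∧ j < k ∧ (A j).Nonempty ∧ v = pv j u}

/-- The emulator graph `H`: an edge `{u, v}` for every `u ∈ A i \ A (i+1)` and `v ∈ B(u)`. -/
def emulGraph (G : SimpleGraph V) (w : V → V → ℝ≥0∞) (A : ℕ → Set V) (pv : ℕ → V → V)
    (k : ℕ) : SimpleGraph V where
  Adj u v := u ≠ v ∧ ∃ i, (u ∈ A i ∧ u ∉ A (i + 1) ∧ v ∈ bunch G w A pv k i u) ∨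
      (v ∈ A i ∧ v ∉ A (i + 1) ∧ u ∈ bunch G w A pv k i v)
  symm := ⟨fun u v h => ⟨h.1.symm, h.2.imp fun _ hi => hi.symm⟩⟩
  loopless := ⟨fun u h => h.1 rfl⟩

section emul

variable {G : SimpleGraph V} {w : V → V → ℝ≥0∞} {A : ℕ → Set V} {pv : ℕ → V → V} {k : ℕ}

/-- The level of a vertex: the largest `ℓ ≤ k` with `u ∈ A ℓ`. -/
noncomputable def levelOf (A : ℕ → Set V) (k : ℕ) (u : V) : ℕ :=
  Nat.findGreatest (fun ℓ => u ∈ A ℓ) k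

lemma hAmono (hAnest : ∀ i, A (i + 1) ⊆ A i) : ∀ {i j : ℕ}, i ≤ j → A j ⊆ A i :=
  fun {i j} h => antitone_nat_of_succ_le hAnest h

lemma mem_lt_k (hAnest : ∀ i, A (i + 1) ⊆ A i) (hAk : A k = ∅) {j : ℕ} {v : V}
    (hv : v ∈ A j) : j < k := by
  by_contra h
  push_neg at h
  have : v ∈ A k := hAmono hAnest h hv
  simp [hAk] at this

lemma level_mem (hA0 : A 0 = Set.univ) (u : V) : u ∈ A (levelOf A k u) :=
  Nat.findGreatest_spec (P := fun ℓ => u ∈ A ℓ) (Nat.zero_le k)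
    (show u ∈ A 0 by rw [hA0]; trivial)

lemma level_lt (hA0 : A 0 = Set.univ) (hAnest : ∀ i, A (i + 1) ⊆ A i) (hAk : A k = ∅)
    (u : V) : levelOf A k u < k :=
  mem_lt_k hAnest hAk (level_mem hA0 u)

lemma le_level (hAnest : ∀ i, A (i + 1) ⊆ A i) (hAk : A k = ∅) {j : ℕ} {u : V}
    (hu : u ∈ A j) : j ≤ levelOf A k u :=
  Nat.le_findGreatest (mem_lt_k hAnest hAk hu).le hu

lemma level_succ_not (hA0 : A 0 = Set.univ) (hAnest : ∀ i, A (i + 1) ⊆ A i) (hAk : A k = ∅)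
    (u : V) : u ∉ A (levelOf A k u + 1) := by
  intro h
  exact absurd (le_level hAnest hAk h) (by omega)

lemma level_lt_of_not_mem (hA0 : A 0 = Set.univ) (hAnest : ∀ i, A (i + 1) ⊆ A i)
    {j : ℕ} {u : V} (hu : u ∉ A j) :
    levelOf A k u < j := by
  by_contra h
  push_neg at h
  exact hu (hAmono hAnest h (level_mem hA0 u))


lemma dH_symm (hwsym : ∀ u v, G.Adj u v → w u v = w v u) (u v : V) :
    gdist (emulGraph G w A pv k) (gdist G w) u v
      = gdist (emulGraph G w A pv k) (gdist G w) v u :=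
  gdist_symm fun _ _ _ => gdist_symm hwsym

lemma gdist_le_dH (u v : V) :
    gdist G w u v ≤ gdist (emulGraph G w A pv k) (gdist G w) u v := by
  refine le_iInf fun p => ?_
  induction p with
  | nil => rw [wWeight_nil, gdist_self]
  | @cons a b c h q ih =>
    rw [wWeight_cons]
    exact gdist_triangle.trans (add_le_add le_rfl ih)

lemma edge_pivot (hA0 : A 0 = Set.univ) (hAnest : ∀ i, A (i + 1) ⊆ A i) (hAk : A k = ∅)
    (hpv : ∀ i, i < k → ∀ v : V, (A i).Nonempty →
      pv i v ∈ A i ∧ ∀ a ∈ A i, gdist G w v (pv i v) ≤ gdist G w v a)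
    {j : ℕ} {u : V} (hne : (A j).Nonempty) (hu : u ∉ A j) :
    (emulGraph G w A pv k).Adj u (pv j u) := by
  have hjk : j < k := mem_lt_k hAnest hAk hne.some_mem
  have hpj := hpv j hjk u hne
  refine ⟨fun h => hu (h ▸ hpj.1), levelOf A k u, Or.inl ?_⟩
  exact ⟨level_mem hA0 u, level_succ_not hA0 hAnest hAk u,
    Or.inr ⟨j, level_lt_of_not_mem hA0 hAnest hu, hjk, hne, rfl⟩⟩

lemma dH_pivot_le (hA0 : A 0 = Set.univ) (hAnest : ∀ i, A (i + 1) ⊆ A i) (hAk : A k = ∅)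
    (hpv : ∀ i, i < k → ∀ v : V, (A i).Nonempty →
      pv i v ∈ A i ∧ ∀ a ∈ A i, gdist G w v (pv i v) ≤ gdist G w v a)
    {j : ℕ} {u : V} (hne : (A j).Nonempty) (hu : u ∉ A j) :
    gdist (emulGraph G w A pv k) (gdist G w) u (pv j u) ≤ gdist G w u (pv j u) :=
  gdist_le_w (edge_pivot hA0 hAnest hAk hpv hne hu)

lemma edge_bunch {i0 : ℕ} {u v : V} (hu : u ∈ A i0) (hnu : u ∉ A (i0 + 1))
    (hv : v ∈ A i0) (hne : u ≠ v)
    (hcond : ∀ a ∈ A (i0 + 1), gdist G w u v < gdist G w u a) :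
    (emulGraph G w A pv k).Adj u v :=
  ⟨hne, i0, Or.inl ⟨hu, hnu, Or.inl ⟨hv, hcond⟩⟩⟩

/-- Zero `G`-distance implies zero `H`-distance. -/
lemma dH_zero (hwsym : ∀ u v, G.Adj u v → w u v = w v u)
    (hA0 : A 0 = Set.univ) (hAnest : ∀ i, A (i + 1) ⊆ A i) (hAk : A k = ∅)
    (hpv : ∀ i, i < k → ∀ v : V, (A i).Nonempty →
      pv i v ∈ A i ∧ ∀ a ∈ A i, gdist G w v (pv i v) ≤ gdist G w v a) :
    ∀ n : ℕ, ∀ u v : V,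
    (k - levelOf A k u) + (k - levelOf A k v) ≤ n → gdist G w u v = 0 →
    gdist (emulGraph G w A pv k) (gdist G w) u v = 0 := by
  intro n
  induction n with
  | zero =>
    intro u v hn _
    have h1 := level_lt hA0 hAnest hAk u
    omega
  | succ n ih =>
    intro u v hn h0
    rcases eq_or_ne u v with rfl | hne
    · exact gdist_self
    by_cases hu1 : ∃ a ∈ A (levelOf A k u + 1), gdist G w u a = 0
    · obtain ⟨a, ha, ha0⟩ := hu1
      have hane : (A (levelOf A k u + 1)).Nonempty := ⟨a, ha⟩
      have hlt : levelOf A k u + 1 < k := mem_lt_k hAnest hAk ha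
      set p := pv (levelOf A k u + 1) u with hp
      have hpspec := hpv _ hlt u hane
      have hup : gdist G w u p = 0 :=
        le_antisymm ((hpspec.2 a ha).trans_eq ha0) (zero_le)
      have hedge : (emulGraph G w A pv k).Adj u p :=
        edge_pivot hA0 hAnest hAk hpv hane (level_succ_not hA0 hAnest hAk u)
      have hpv0 : gdist G w p v = 0 := by
        refine le_antisymm ?_ (zero_le)
        calc gdist G w p v ≤ gdist G w p u + gdist G w u v := gdist_triangle
        _ = 0 := by rw [← gdist_symm hwsym, hup, h0, add_zero]
      have hlp : levelOf A k u + 1 ≤ levelOf A k p := le_level hAnest hAk hpspec.1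
      have hrec : gdist (emulGraph G w A pv k) (gdist G w) p v = 0 := by
        refine ih p v ?_ hpv0
        have := level_lt hA0 hAnest hAk p
        omega
      refine le_antisymm ?_ (zero_le)
      calc gdist (emulGraph G w A pv k) (gdist G w) u v
          ≤ gdist (emulGraph G w A pv k) (gdist G w) u p
            + gdist (emulGraph G w A pv k) (gdist G w) p v := gdist_triangle
      _ ≤ gdist G w u p + 0 := add_le_add (gdist_le_w hedge) hrec.le
      _ = 0 := by rw [hup, add_zero]
    by_cases hv1 : ∃ a ∈ A (levelOf A k v + 1), gdist G w v a = 0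
    · obtain ⟨a, ha, ha0⟩ := hv1
      have hane : (A (levelOf A k v + 1)).Nonempty := ⟨a, ha⟩
      have hlt : levelOf A k v + 1 < k := mem_lt_k hAnest hAk ha
      set p := pv (levelOf A k v + 1) v with hp
      have hpspec := hpv _ hlt v hane
      have hvp : gdist G w v p = 0 :=
        le_antisymm ((hpspec.2 a ha).trans_eq ha0) (zero_le)
      have hedge : (emulGraph G w A pv k).Adj v p :=
        edge_pivot hA0 hAnest hAk hpv hane (level_succ_not hA0 hAnest hAk v)
      have hup0 : gdist G w u p = 0 := by
        refine le_antisymm ?_ (zero_le)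
        calc gdist G w u p ≤ gdist G w u v + gdist G w v p := gdist_triangle
        _ = 0 := by rw [h0, hvp, add_zero]
      have hlp : levelOf A k v + 1 ≤ levelOf A k p := le_level hAnest hAk hpspec.1
      have hrec : gdist (emulGraph G w A pv k) (gdist G w) u p = 0 := by
        refine ih u p ?_ hup0
        have := level_lt hA0 hAnest hAk p
        omega
      refine le_antisymm ?_ (zero_le)
      calc gdist (emulGraph G w A pv k) (gdist G w) u v
          ≤ gdist (emulGraph G w A pv k) (gdist G w) u p
            + gdist (emulGraph G w A pv k) (gdist G w) p v := gdist_triangle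
      _ ≤ 0 + gdist G w p v := by
          refine add_le_add hrec.le ?_
          rw [dH_symm hwsym, gdist_symm hwsym]
          exact gdist_le_w hedge
      _ = 0 := by rw [← gdist_symm hwsym, hvp, zero_add]
    · push_neg at hu1 hv1
      rcases le_total (levelOf A k u) (levelOf A k v) with hle | hle
      · have hedge : (emulGraph G w A pv k).Adj u v := by
          refine edge_bunch (level_mem hA0 u) (level_succ_not hA0 hAnest hAk u)
            (hAmono hAnest hle (level_mem hA0 v)) hne fun a ha => ?_
          rw [h0]
          exact pos_iff_ne_zero.2 (hu1 a ha)
        refine le_antisymm ((gdist_le_w hedge).trans h0.le) (zero_le)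
      · have hedge : (emulGraph G w A pv k).Adj v u := by
          refine edge_bunch (level_mem hA0 v) (level_succ_not hA0 hAnest hAk v)
            (hAmono hAnest hle (level_mem hA0 u)) hne.symm fun a ha => ?_
          rw [gdist_symm hwsym, h0]
          exact pos_iff_ne_zero.2 (hv1 a ha)
        rw [dH_symm hwsym]
        refine le_antisymm ((gdist_le_w hedge).trans ?_) (zero_le)
        rw [gdist_symm hwsym, h0]

end emul



section seg

lemma seg_g_le {n : ℕ} {g : ℕ → ℕ → ℝ≥0∞}
    (hadd : ∀ s t r : ℕ, s ≤ t → t ≤ r → r ≤ n → g s t + g t r = g s r)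
    {s t : ℕ} (hst : s ≤ t) (htn : t ≤ n) : g s t ≤ g 0 n := by
  have h1 : g s t + g t n = g s n := hadd s t n hst htn le_rfl
  have h2 : g 0 s + g s n = g 0 n := hadd 0 s n (Nat.zero_le _) (hst.trans htn) le_rfl
  calc g s t ≤ g s t + g t n := le_self_add
  _ = g s n := h1
  _ ≤ g 0 s + g s n := le_add_self
  _ = g 0 n := h2

lemma seg_g_self {n : ℕ} {g : ℕ → ℕ → ℝ≥0∞}
    (hadd : ∀ s t r : ℕ, s ≤ t → t ≤ r → r ≤ n → g s t + g t r = g s r)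
    (hfin : g 0 n ≠ ⊤) {t : ℕ} (htn : t ≤ n) : g t t = 0 := by
  have h1 : g t t + g t t = g t t := hadd t t t le_rfl le_rfl htn
  have h2 : g t t ≠ ⊤ := fun h => hfin (top_le_iff.1 (h ▸ seg_g_le hadd le_rfl htn))
  have := ENNReal.sub_eq_of_eq_add_rev h2 h1.symm
  simpa using this.symm

lemma segmentation {n : ℕ} {g : ℕ → ℕ → ℝ≥0∞} {T : ℝ≥0∞}
    (hT0 : 0 < T) (hTtop : T ≠ ⊤)
    (hadd : ∀ s t r : ℕ, s ≤ t → t ≤ r → r ≤ n → g s t + g t r = g s r)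
    (hfin : g 0 n ≠ ⊤)
    (hstep : ∀ t, t < n → g t (t + 1) ≤ T) :
    ∀ fuel t0, n - t0 ≤ fuel → t0 ≤ n → T ≤ g t0 n →
    ∃ m : ℕ, 1 ≤ m ∧ ∃ f : ℕ → ℕ, f 0 = t0 ∧ f m = n ∧
      (∀ j, j < m → f j < f (j + 1)) ∧ (∀ j, j ≤ m → f j ≤ n) ∧
      (∀ j, j < m → T ≤ g (f j) (f (j + 1)) ∧ g (f j) (f (j + 1)) ≤ 3 * T) := by
  intro fuel
  induction fuel with
  | zero =>
    intro t0 hfuel ht0 hT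
    have h1 : t0 = n := by omega
    rw [h1, seg_g_self hadd hfin le_rfl] at hT
    exact absurd hT (by simpa using hT0.ne')
  | succ fuel ih =>
    intro t0 hfuel ht0 hT
    have ht0n : t0 < n := by
      rcases eq_or_lt_of_le ht0 with rfl | h
      · rw [seg_g_self hadd hfin le_rfl] at hT
        exact absurd hT (by simpa using hT0.ne')
      · exact h
    by_cases hsmall : g t0 n ≤ 3 * T
    · refine ⟨1, le_rfl, fun j => if j = 0 then t0 else n, by simp, by simp, ?_, ?_, ?_⟩
      · intro j hj
        interval_cases j
        simpa using ht0n
      · intro j _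
        rcases eq_or_ne j 0 with rfl | hj
        · simp [ht0]
        · simp [hj]
      · intro j hj
        interval_cases j
        simpa using ⟨hT, hsmall⟩
    · push_neg at hsmall
      have hex : ∃ r, t0 < r ∧ T ≤ g t0 r := ⟨n, ht0n, hT⟩
      obtain ⟨hrgt, hrT⟩ := Nat.find_spec hex
      have hmin : ∀ m, m < Nat.find hex → ¬(t0 < m ∧ T ≤ g t0 m) := fun m hm =>
        Nat.find_min hex hm
      set r := Nat.find hex with hr
      clear_value r
      have hrn : r ≤ n := by rw [hr]; exact Nat.find_le ⟨ht0n, hT⟩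
      have hrup : g t0 r ≤ 2 * T := by
        obtain ⟨r', rfl⟩ : ∃ r', r = r' + 1 := ⟨r - 1, by omega⟩
        rcases eq_or_lt_of_le (Nat.succ_le_of_lt hrgt) with h | h
        · rw [← h]
          calc g t0 (t0 + 1) ≤ T := hstep t0 ht0n
          _ ≤ 2 * T := by
              rw [two_mul]; exact le_self_add
        · have hminr : ¬(t0 < r' ∧ T ≤ g t0 r') := hmin r' (by omega)
          have hr' : g t0 r' ≤ T := by
            rcases le_or_gt (g t0 r') T with h2 | h2
            · exact h2
            · exact absurd ⟨by omega, h2.le⟩ hminr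
          have hsplit : g t0 r' + g r' (r' + 1) = g t0 (r' + 1) :=
            hadd t0 r' (r' + 1) (by omega) (by omega) hrn
          rw [← hsplit, two_mul]
          exact add_le_add hr' (hstep r' (by omega))
      have hrltn : r < n := by
        rcases eq_or_lt_of_le hrn with rfl | h
        · exfalso
          have : (3 : ℝ≥0∞) * T ≤ 2 * T := hsmall.le.trans hrup
          have h3 : (2 : ℝ≥0∞) * T < 3 * T := by
            apply ENNReal.mul_lt_mul_iff_left hT0.ne' hTtop |>.2
            norm_num
          exact absurd this h3.not_ge
        · exact h
      have hrem : T ≤ g r n := by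
        by_contra h
        push_neg at h
        have hsplit : g t0 r + g r n = g t0 n := hadd t0 r n hrgt.le hrn le_rfl
        have hfr : g t0 r ≠ ⊤ :=
          ne_top_of_le_ne_top (ENNReal.mul_ne_top (by norm_num) hTtop) hrup
        have : g t0 n < 3 * T := by
          rw [← hsplit]
          calc g t0 r + g r n < 2 * T + T :=
              ENNReal.add_lt_add_of_le_of_lt hfr hrup h
          _ = 3 * T := by ring
        exact absurd this hsmall.not_gt
      obtain ⟨m', hm', f', hf0, hfm, hinc, hbnd, hseg⟩ :=
        ih r (by omega) hrn hrem
      refine ⟨m' + 1, by omega, fun j => if j = 0 then t0 else f' (j - 1), by simp, ?_, ?_, ?_, ?_⟩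
      · simp [hfm]
      · intro j hj
        rcases eq_or_ne j 0 with rfl | hjne
        · simpa [hf0] using hrgt
        · obtain ⟨j', rfl⟩ : ∃ j', j = j' + 1 := ⟨j - 1, by omega⟩
          simpa [hjne] using hinc j' (by omega)
      · intro j hj
        rcases eq_or_ne j 0 with rfl | hjne
        · simpa using ht0
        · obtain ⟨j', rfl⟩ : ∃ j', j = j' + 1 := ⟨j - 1, by omega⟩
          simpa [hjne] using hbnd j' (by omega)
      · intro j hj
        rcases eq_or_ne j 0 with rfl | hjne
        · have h2 : (2 : ℝ≥0∞) * T ≤ 3 * T := mul_le_mul_left (by norm_num) T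
          simpa [hf0] using ⟨hrT, hrup.trans h2⟩
        · obtain ⟨j', rfl⟩ : ∃ j', j = j' + 1 := ⟨j - 1, by omega⟩
          simpa [hjne] using hseg j' (by omega)

end seg



section arith

variable {Δ : ℝ} (hΔ : 3 < Δ) {T D : ℝ≥0∞}

lemma beta_split (hΔ : 3 < Δ) :
    ENNReal.ofReal (Δ / (Δ - 3)) = 1 + ENNReal.ofReal (3 / (Δ - 3)) := by
  have h3 : (0:ℝ) < Δ - 3 := by linarith
  rw [← ENNReal.ofReal_one, ← ENNReal.ofReal_add (by norm_num) (by positivity)]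
  congr 1
  field_simp
  ring

lemma arith2 (hΔ : 3 < Δ) (hDfin : D ≠ ⊤) (hTD : ENNReal.ofReal (3 * Δ) * T ≤ D) :
    D + ENNReal.ofReal (Δ / (Δ - 3)) * (3 * T) * 3 ≤ ENNReal.ofReal (Δ / (Δ - 3)) * D := by
  have h3 : (0:ℝ) < Δ - 3 := by linarith
  have key : ENNReal.ofReal (Δ / (Δ - 3)) * (3 * T) * 3 ≤ ENNReal.ofReal (3 / (Δ - 3)) * D := by
    have e1 : ENNReal.ofReal (Δ / (Δ - 3)) * 3 * 3
        = ENNReal.ofReal (3 / (Δ - 3)) * ENNReal.ofReal (3 * Δ) := by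
      rw [show (3:ℝ≥0∞) = ENNReal.ofReal 3 by simp [ENNReal.ofReal_ofNat],
        ← ENNReal.ofReal_mul (by positivity), ← ENNReal.ofReal_mul (by positivity),
        ← ENNReal.ofReal_mul (by positivity)]
      congr 1
      field_simp
    calc ENNReal.ofReal (Δ / (Δ - 3)) * (3 * T) * 3
        = ENNReal.ofReal (Δ / (Δ - 3)) * 3 * 3 * T := by ring
    _ = ENNReal.ofReal (3 / (Δ - 3)) * (ENNReal.ofReal (3 * Δ) * T) := by rw [e1]; ring
    _ ≤ ENNReal.ofReal (3 / (Δ - 3)) * D := mul_le_mul_right hTD _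
  calc D + ENNReal.ofReal (Δ / (Δ - 3)) * (3 * T) * 3
      ≤ D + ENNReal.ofReal (3 / (Δ - 3)) * D := add_le_add le_rfl key
  _ = (1 + ENNReal.ofReal (3 / (Δ - 3))) * D := by rw [add_mul, one_mul]
  _ = ENNReal.ofReal (Δ / (Δ - 3)) * D := by rw [← beta_split hΔ]

lemma arith3 (hΔ : 3 < Δ) (i : ℕ) (hDfin : D ≠ ⊤)
    (hTD : ENNReal.ofReal (3 * Δ) * T ≤ D) :
    ENNReal.ofReal (1 + 4 * i / (Δ - 3)) * D + ENNReal.ofReal (Δ / (Δ - 3)) * (3 * T) * 4 ≤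
      ENNReal.ofReal (1 + 4 * (i + 1 : ℕ) / (Δ - 3)) * D := by
  have h3 : (0:ℝ) < Δ - 3 := by linarith
  have hsplit : ENNReal.ofReal (1 + 4 * (i + 1 : ℕ) / (Δ - 3))
      = ENNReal.ofReal (1 + 4 * i / (Δ - 3)) + ENNReal.ofReal (4 / (Δ - 3)) := by
    rw [← ENNReal.ofReal_add (by positivity) (by positivity)]
    congr 1
    push_cast
    field_simp
    ring
  have key : ENNReal.ofReal (Δ / (Δ - 3)) * (3 * T) * 4 ≤ ENNReal.ofReal (4 / (Δ - 3)) * D := by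
    have e1 : ENNReal.ofReal (Δ / (Δ - 3)) * 3 * 4
        = ENNReal.ofReal (4 / (Δ - 3)) * ENNReal.ofReal (3 * Δ) := by
      rw [show (3:ℝ≥0∞) = ENNReal.ofReal 3 by simp [ENNReal.ofReal_ofNat],
        show (4:ℝ≥0∞) = ENNReal.ofReal 4 by simp [ENNReal.ofReal_ofNat],
        ← ENNReal.ofReal_mul (by positivity), ← ENNReal.ofReal_mul (by positivity),
        ← ENNReal.ofReal_mul (by positivity)]
      congr 1
      field_simp
    calc ENNReal.ofReal (Δ / (Δ - 3)) * (3 * T) * 4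
        = ENNReal.ofReal (Δ / (Δ - 3)) * 3 * 4 * T := by ring
    _ = ENNReal.ofReal (4 / (Δ - 3)) * (ENNReal.ofReal (3 * Δ) * T) := by rw [e1]; ring
    _ ≤ ENNReal.ofReal (4 / (Δ - 3)) * D := mul_le_mul_right hTD _
  rw [hsplit, add_mul]
  exact add_le_add (le_rfl) key

end arith

section chain

/-- Chaining distance bounds along consecutive points. -/
lemma chain_lemma {H : SimpleGraph V} {wH : V → V → ℝ≥0∞} (c : ℝ≥0∞) (vv : ℕ → V)
    (a : ℕ) : ∀ b : ℕ, a ≤ b →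
    (∀ j, a ≤ j → j < b → wH (vv a) (vv j) + wH (vv j) (vv (j + 1)) = wH (vv a) (vv (j + 1))) →
    (∀ j, a ≤ j → j < b → gdist H wH (vv j) (vv (j + 1)) ≤ c * wH (vv j) (vv (j + 1))) →
    gdist H wH (vv a) (vv b) ≤ c * wH (vv a) (vv b) := by
  intro b
  induction b with
  | zero =>
    intro hab _ _
    have : a = 0 := by omega
    subst this
    rw [gdist_self]
    exact zero_le
  | succ b ihb =>
    intro hab hadd hbound
    rcases eq_or_lt_of_le hab with rfl | hlt
    · rw [gdist_self]
      exact zero_le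
    · have hab' : a ≤ b := by omega
      calc gdist H wH (vv a) (vv (b + 1))
          ≤ gdist H wH (vv a) (vv b) + gdist H wH (vv b) (vv (b + 1)) := gdist_triangle
      _ ≤ c * wH (vv a) (vv b) + c * wH (vv b) (vv (b + 1)) := by
          refine add_le_add (ihb hab' (fun j h1 h2 => hadd j h1 (by omega))
            (fun j h1 h2 => hbound j h1 (by omega))) (hbound b hab' (by omega))
      _ = c * (wH (vv a) (vv b) + wH (vv b) (vv (b + 1))) := (mul_add _ _ _).symm
      _ = c * wH (vv a) (vv (b + 1)) := by rw [hadd b hab' (by omega)]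

end chain

section misc

variable {G : SimpleGraph V} {w : V → V → ℝ≥0∞} {x y : V}

lemma wWeight_eq_zero_of_maxW {q : G.Walk x y} (h : maxW w q = 0) : wWeight w q = 0 :=
  List.sum_eq_zero fun a ha => by
    obtain ⟨d, hd, rfl⟩ := List.mem_map.1 ha
    exact le_antisymm ((le_maxW q hd).trans h.le) (zero_le)

lemma gdist_getVert_succ_le {q : G.Walk x y} (hq : wWeight w q = gdist G w x y)
    (hfin : gdist G w x y ≠ ⊤) (t : ℕ) :
    gdist G w (q.getVert t) (q.getVert (t + 1)) ≤ maxW w q := by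
  rw [gdist_wsub hq hfin (Nat.le_succ t), wWeight_darts, darts_wsub,
    show t + 1 - t = 1 by omega]
  cases h : q.darts.drop t with
  | nil => simp [wWeight]
  | cons d l =>
    have hmem : d ∈ q.darts := List.mem_of_mem_drop (h ▸ (List.mem_cons_self : d ∈ d :: l))
    simpa using le_maxW (w := w) q hmem

end misc







section mainsec

variable {G : SimpleGraph V} {w : V → V → ℝ≥0∞} {A : ℕ → Set V} {pv : ℕ → V → V} {k : ℕ}

lemma pivot_zero (hwsym : ∀ u v, G.Adj u v → w u v = w v u)
    (hA0 : A 0 = Set.univ) (hAnest : ∀ i, A (i + 1) ⊆ A i) (hAk : A k = ∅)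
    (hpv : ∀ i, i < k → ∀ v : V, (A i).Nonempty →
      pv i v ∈ A i ∧ ∀ a ∈ A i, gdist G w v (pv i v) ≤ gdist G w v a)
    {j : ℕ} {x : V} (hx : x ∈ A (j + 1)) (c : ℝ≥0∞) :
    (A (j + 1)).Nonempty ∧ gdist (emulGraph G w A pv k) (gdist G w) x (pv (j + 1) x) ≤ c := by
  have hne : (A (j + 1)).Nonempty := ⟨x, hx⟩
  have hlt : j + 1 < k := mem_lt_k hAnest hAk hx
  have h0 : gdist G w x (pv (j + 1) x) = 0 :=
    le_antisymm (((hpv _ hlt x hne).2 x hx).trans_eq gdist_self) (zero_le)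
  have hz := dH_zero hwsym hA0 hAnest hAk hpv (2 * k) x (pv (j + 1) x) (by omega) h0
  exact ⟨hne, hz.le.trans (zero_le (a := c))⟩

theorem mainlem (G : SimpleGraph V)
    (w : V → V → ℝ≥0∞) (hwsym : ∀ u v, G.Adj u v → w u v = w v u)
    (hwfin : ∀ u v, G.Adj u v → w u v ≠ ⊤)
    (k : ℕ) (A : ℕ → Set V) (hA0 : A 0 = Set.univ)
    (hAnest : ∀ i, A (i + 1) ⊆ A i) (hAk : A k = ∅)
    (pv : ℕ → V → V)
    (hpv : ∀ i, i < k → ∀ v : V, (A i).Nonempty →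
      pv i v ∈ A i ∧ ∀ a ∈ A i, gdist G w v (pv i v) ≤ gdist G w v a)
    (Δ : ℝ) (hΔ : 3 < Δ) :
    ∀ (i : ℕ) (x y : V) (Wxy : ℝ≥0∞),
    (∃ q : G.Walk x y, q.IsPath ∧ wWeight w q = gdist G w x y ∧ maxW w q = Wxy) →
    ENNReal.ofReal ((3 * Δ) ^ i) * Wxy ≤ gdist G w x y →
    gdist (emulGraph G w A pv k) (gdist G w) x y ≤
        ENNReal.ofReal (1 + 4 * i / (Δ - 3)) * gdist G w x y ∨
      ((A (i + 1)).Nonempty ∧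
        gdist (emulGraph G w A pv k) (gdist G w) x (pv (i + 1) x) ≤
          ENNReal.ofReal (Δ / (Δ - 3)) * gdist G w x y) := by
  have h3 : (0:ℝ) < Δ - 3 := by linarith
  have hbeta1 : (1:ℝ≥0∞) ≤ ENNReal.ofReal (Δ / (Δ - 3)) := by
    rw [ENNReal.one_le_ofReal, le_div_iff₀ h3]
    linarith
  intro i
  induction i with
  | zero =>
    intro x y Wxy hW hfar
    by_cases hx1 : x ∈ A 1
    · exact Or.inr (pivot_zero hwsym hA0 hAnest hAk hpv hx1 _)
    by_cases hcond : ∀ a ∈ A 1, gdist G w x y < gdist G w x a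
    · left
      have hb : gdist (emulGraph G w A pv k) (gdist G w) x y ≤ gdist G w x y := by
        rcases eq_or_ne x y with rfl | hne
        · rw [gdist_self]
          exact zero_le
        · refine gdist_le_w (edge_bunch (i0 := 0) ?_ hx1 ?_ hne hcond)
          · rw [hA0]; trivial
          · rw [hA0]; trivial
      refine hb.trans (le_mul_of_one_le_left (zero_le) ?_)
      rw [ENNReal.one_le_ofReal]
      have h4 : (0:ℝ) ≤ 4 * ((0:ℕ):ℝ) / (Δ - 3) := by positivity
      linarith
    · push_neg at hcond
      obtain ⟨a, ha, hle⟩ := hcond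
      right
      have hne1 : (A 1).Nonempty := ⟨a, ha⟩
      have h1k : 1 < k := mem_lt_k hAnest hAk ha
      refine ⟨hne1, ?_⟩
      calc gdist (emulGraph G w A pv k) (gdist G w) x (pv 1 x)
          ≤ gdist G w x (pv 1 x) := dH_pivot_le hA0 hAnest hAk hpv hne1 hx1
      _ ≤ gdist G w x a := (hpv 1 h1k x hne1).2 a ha
      _ ≤ gdist G w x y := hle
      _ ≤ ENNReal.ofReal (Δ / (Δ - 3)) * gdist G w x y := le_mul_of_one_le_left (zero_le) hbeta1
  | succ i ih =>
    intro x y Wxy hW hfar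
    obtain ⟨q, hqpath, hqw, hqmax⟩ := hW
    subst hqmax
    have hDfin : gdist G w x y ≠ ⊤ :=
      ((gdist_le q).trans_lt (wWeight_lt_top hwfin q)).ne
    by_cases hD0 : gdist G w x y = 0
    · left
      have hz := dH_zero hwsym hA0 hAnest hAk hpv (2 * k) x y (by omega) hD0
      rw [hz]
      exact zero_le
    by_cases hxin : x ∈ A (i + 1 + 1)
    · exact Or.inr (pivot_zero hwsym hA0 hAnest hAk hpv hxin _)
    have hWle : maxW w q ≤ gdist G w x y := (maxW_le_wWeight q).trans_eq hqw
    have hWfin : maxW w q ≠ ⊤ := (hWle.trans_lt hDfin.lt_top).ne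
    have hW0 : maxW w q ≠ 0 := fun h => hD0 (hqw ▸ wWeight_eq_zero_of_maxW h)
    set T : ℝ≥0∞ := ENNReal.ofReal ((3 * Δ) ^ i) * maxW w q with hTdef
    have h3Δpos : (0:ℝ) < 3 * Δ := by linarith
    have hT0 : 0 < T :=
      ENNReal.mul_pos (ENNReal.ofReal_pos.2 (by positivity)).ne' hW0
    have hTtop : T ≠ ⊤ := ENNReal.mul_ne_top ENNReal.ofReal_ne_top hWfin
    have h3DT : ENNReal.ofReal (3 * Δ) * T ≤ gdist G w x y := by
      rw [hTdef, ← mul_assoc, ← ENNReal.ofReal_mul h3Δpos.le, ← pow_succ']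
      exact hfar
    have hWT : maxW w q ≤ T := by
      rw [hTdef]
      refine le_mul_of_one_le_left (zero_le) ?_
      rw [ENNReal.one_le_ofReal]
      exact one_le_pow₀ (by linarith)
    have hgadd : ∀ s t r : ℕ, s ≤ t → t ≤ r → r ≤ q.length →
        gdist G w (q.getVert s) (q.getVert t) + gdist G w (q.getVert t) (q.getVert r)
          = gdist G w (q.getVert s) (q.getVert r) := by
      intro s t r hst htr _
      rw [gdist_wsub hqw hDfin hst, gdist_wsub hqw hDfin htr,
        gdist_wsub hqw hDfin (hst.trans htr)]
      exact wWeight_wsub_add q hst htr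
    have hgfin : gdist G w (q.getVert 0) (q.getVert q.length) ≠ ⊤ := by
      rw [SimpleGraph.Walk.getVert_zero, SimpleGraph.Walk.getVert_length]
      exact hDfin
    have hgstep : ∀ t, t < q.length → gdist G w (q.getVert t) (q.getVert (t + 1)) ≤ T :=
      fun t _ => (gdist_getVert_succ_le hqw hDfin t).trans hWT
    have hTn : T ≤ gdist G w (q.getVert 0) (q.getVert q.length) := by
      rw [SimpleGraph.Walk.getVert_zero, SimpleGraph.Walk.getVert_length]
      calc T ≤ ENNReal.ofReal (3 * Δ) * T :=
          le_mul_of_one_le_left (zero_le) (by rw [ENNReal.one_le_ofReal]; linarith)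
      _ ≤ _ := h3DT
    obtain ⟨m, hm1, f, hf0, hfm, hinc, hbnd, hseg⟩ :=
      segmentation hT0 hTtop hgadd hgfin hgstep q.length 0 (by omega) (Nat.zero_le _) hTn
    have hfmono : ∀ a b : ℕ, a ≤ b → b ≤ m → f a ≤ f b := by
      intro a b hab hbm
      induction b, hab using Nat.le_induction with
      | base => exact le_rfl
      | succ b hab2 ihb => exact le_trans (ihb (by omega)) (hinc b (by omega)).le
    have hx0 : q.getVert (f 0) = x := by rw [hf0]; exact q.getVert_zero
    have hym : q.getVert (f m) = y := by rw [hfm]; exact q.getVert_length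
    have hc'1 : (1:ℝ≥0∞) ≤ ENNReal.ofReal (1 + 4 * (i:ℕ) / (Δ - 3)) := by
      rw [ENNReal.one_le_ofReal]
      have h4 : (0:ℝ) ≤ 4 * (i:ℕ) / (Δ - 3) := by positivity
      linarith
    have hdichF : ∀ j, j < m →
        (gdist (emulGraph G w A pv k) (gdist G w) (q.getVert (f j)) (q.getVert (f (j+1))) ≤ ENNReal.ofReal (1 + 4 * (i:ℕ) / (Δ - 3)) * gdist G w (q.getVert (f j)) (q.getVert (f (j+1)))) ∨
        ((A (i + 1)).Nonempty ∧
          gdist (emulGraph G w A pv k) (gdist G w) (q.getVert (f j)) (pv (i+1) (q.getVert (f j)))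
            ≤ ENNReal.ofReal (Δ / (Δ - 3)) * gdist G w (q.getVert (f j)) (q.getVert (f (j+1)))) := by
      intro j hj
      have hst : f j ≤ f (j+1) := (hinc j hj).le
      refine ih (q.getVert (f j)) (q.getVert (f (j+1))) (maxW w (wsub q hst))
        ⟨wsub q hst, isPath_wsub hqpath hst, (gdist_wsub hqw hDfin hst).symm, rfl⟩ ?_
      calc ENNReal.ofReal ((3 * Δ) ^ i) * maxW w (wsub q hst)
          ≤ T := by rw [hTdef]; exact mul_le_mul_right (maxW_wsub_le q hst) _
      _ ≤ gdist G w (q.getVert (f j)) (q.getVert (f (j+1))) := (hseg j hj).1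
    have hdichB : ∀ j, j < m →
        (gdist (emulGraph G w A pv k) (gdist G w) (q.getVert (f (j+1))) (q.getVert (f j)) ≤ ENNReal.ofReal (1 + 4 * (i:ℕ) / (Δ - 3)) * gdist G w (q.getVert (f (j+1))) (q.getVert (f j))) ∨
        ((A (i + 1)).Nonempty ∧
          gdist (emulGraph G w A pv k) (gdist G w) (q.getVert (f (j+1))) (pv (i+1) (q.getVert (f (j+1))))
            ≤ ENNReal.ofReal (Δ / (Δ - 3)) * gdist G w (q.getVert (f (j+1))) (q.getVert (f j))) := by
      intro j hj
      have hst : f j ≤ f (j+1) := (hinc j hj).le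
      refine ih (q.getVert (f (j+1))) (q.getVert (f j)) (maxW w (wsub q hst).reverse)
        ⟨(wsub q hst).reverse, (isPath_wsub hqpath hst).reverse, ?_, rfl⟩ ?_
      · rw [wWeight_reverse hwsym, gdist_symm hwsym]
        exact (gdist_wsub hqw hDfin hst).symm
      · calc ENNReal.ofReal ((3 * Δ) ^ i) * maxW w (wsub q hst).reverse
            ≤ T := by
              rw [hTdef]
              exact mul_le_mul_right
                ((maxW_reverse_le hwsym _).trans (maxW_wsub_le q hst)) _
        _ ≤ gdist G w (q.getVert (f j)) (q.getVert (f (j+1))) := (hseg j hj).1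
        _ = gdist G w (q.getVert (f (j+1))) (q.getVert (f j)) := gdist_symm hwsym
    by_cases hallF : ∀ j, j < m → (gdist (emulGraph G w A pv k) (gdist G w) (q.getVert (f j)) (q.getVert (f (j+1))) ≤ ENNReal.ofReal (1 + 4 * (i:ℕ) / (Δ - 3)) * gdist G w (q.getVert (f j)) (q.getVert (f (j+1))))
    · left
      have hch := chain_lemma (H := emulGraph G w A pv k) (wH := gdist G w)
        (ENNReal.ofReal (1 + 4 * (i:ℕ) / (Δ - 3))) (fun j => q.getVert (f j)) 0 m (Nat.zero_le m)
        (fun j h1 h2 => hgadd (f 0) (f j) (f (j+1))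
          (hfmono 0 j (by omega) (by omega)) ((hinc j h2).le) (hbnd (j+1) (by omega)))
        (fun j h1 h2 => hallF j h2)
      simp only [hx0, hym] at hch
      have hccoef : ENNReal.ofReal (1 + 4 * (i:ℕ) / (Δ - 3)) ≤ ENNReal.ofReal (1 + 4 * ((i+1:ℕ):ℝ) / (Δ - 3)) := by
        refine ENNReal.ofReal_le_ofReal ?_
        have hle4 : (4:ℝ) * (i:ℕ) / (Δ - 3) ≤ 4 * ((i+1:ℕ):ℝ) / (Δ - 3) := by
          gcongr <;> push_cast <;> linarith
        linarith
      exact hch.trans (mul_le_mul_left hccoef _)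
    · push_neg at hallF
      obtain ⟨j0, hj0m, hj0⟩ := hallF
      have hexF : ∃ j, j < m ∧ (ENNReal.ofReal (1 + 4 * (i:ℕ) / (Δ - 3)) * gdist G w (q.getVert (f j)) (q.getVert (f (j+1))) < gdist (emulGraph G w A pv k) (gdist G w) (q.getVert (f j)) (q.getVert (f (j+1)))) := ⟨j0, hj0m, hj0⟩
      obtain ⟨hjsm, hjsF⟩ := Nat.find_spec hexF
      have hminF : ∀ j, j < Nat.find hexF → j < m → (gdist (emulGraph G w A pv k) (gdist G w) (q.getVert (f j)) (q.getVert (f (j+1))) ≤ ENNReal.ofReal (1 + 4 * (i:ℕ) / (Δ - 3)) * gdist G w (q.getVert (f j)) (q.getVert (f (j+1)))) := by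
        intro j h1 h2
        have h4 := Nat.find_min hexF h1
        rw [not_and] at h4
        exact not_lt.1 (h4 h2)
      set js := Nat.find hexF with hjsdef
      clear_value js
      have hjem := Nat.findGreatest_spec
        (P := fun j => j < m ∧ (ENNReal.ofReal (1 + 4 * (i:ℕ) / (Δ - 3)) * gdist G w (q.getVert (f j)) (q.getVert (f (j+1))) < gdist (emulGraph G w A pv k) (gdist G w) (q.getVert (f j)) (q.getVert (f (j+1))))) hjsm.le ⟨hjsm, hjsF⟩
      have hmaxF : ∀ j, Nat.findGreatest (fun j => j < m ∧ (ENNReal.ofReal (1 + 4 * (i:ℕ) / (Δ - 3)) * gdist G w (q.getVert (f j)) (q.getVert (f (j+1))) < gdist (emulGraph G w A pv k) (gdist G w) (q.getVert (f j)) (q.getVert (f (j+1))))) m < j →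
          j < m → (gdist (emulGraph G w A pv k) (gdist G w) (q.getVert (f j)) (q.getVert (f (j+1))) ≤ ENNReal.ofReal (1 + 4 * (i:ℕ) / (Δ - 3)) * gdist G w (q.getVert (f j)) (q.getVert (f (j+1)))) := by
        intro j h1 h2
        have h4 := Nat.findGreatest_is_greatest h1 h2.le
        rw [not_and] at h4
        exact not_lt.1 (h4 h2)
      set je := Nat.findGreatest (fun j => j < m ∧ (ENNReal.ofReal (1 + 4 * (i:ℕ) / (Δ - 3)) * gdist G w (q.getVert (f j)) (q.getVert (f (j+1))) < gdist (emulGraph G w A pv k) (gdist G w) (q.getVert (f j)) (q.getVert (f (j+1))))) m with hjedef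
      clear_value je
      obtain ⟨hjem1, hjeF⟩ := hjem
      have hjsle : js ≤ je := by
        rw [hjedef]
        exact Nat.le_findGreatest hjsm.le ⟨hjsm, hjsF⟩
      -- pivot data at js and je+1
      obtain ⟨hAne, hzp⟩ := (hdichF js hjsm).resolve_left hjsF.not_ge
      obtain ⟨-, hz'p⟩ := (hdichB je hjem1).resolve_left (by
        intro hBL
        apply hjeF.not_ge
        rw [dH_symm hwsym, gdist_symm hwsym]
        exact hBL)
      have hik : i + 1 < k := mem_lt_k hAnest hAk hAne.some_mem
      -- distances
      have hzp3 : gdist (emulGraph G w A pv k) (gdist G w) (q.getVert (f js)) (pv (i+1) (q.getVert (f js))) ≤ ENNReal.ofReal (Δ / (Δ - 3)) * (3 * T) :=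
        hzp.trans (mul_le_mul_right (hseg js hjsm).2 _)
      have hz'p3 : gdist (emulGraph G w A pv k) (gdist G w) (q.getVert (f (je+1))) (pv (i+1) (q.getVert (f (je+1)))) ≤ ENNReal.ofReal (Δ / (Δ - 3)) * (3 * T) := by
        refine hz'p.trans ?_
        rw [gdist_symm hwsym]
        exact mul_le_mul_right (hseg je hjem1).2 _
      have hgzp : gdist G w (q.getVert (f js)) (pv (i+1) (q.getVert (f js))) ≤ ENNReal.ofReal (Δ / (Δ - 3)) * (3 * T) := (gdist_le_dH _ _).trans hzp3
      have hgz'p' : gdist G w (q.getVert (f (je+1))) (pv (i+1) (q.getVert (f (je+1)))) ≤ ENNReal.ofReal (Δ / (Δ - 3)) * (3 * T) := (gdist_le_dH _ _).trans hz'p3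
      -- chains
      have hchain1 : gdist (emulGraph G w A pv k) (gdist G w) (x) (q.getVert (f js)) ≤ ENNReal.ofReal (1 + 4 * (i:ℕ) / (Δ - 3)) * gdist G w (x) (q.getVert (f js)) := by
        have hch := chain_lemma (H := emulGraph G w A pv k) (wH := gdist G w)
          (ENNReal.ofReal (1 + 4 * (i:ℕ) / (Δ - 3))) (fun j => q.getVert (f j)) 0 js (Nat.zero_le js)
          (fun j h1 h2 => hgadd (f 0) (f j) (f (j+1))
            (hfmono 0 j (by omega) (by omega)) ((hinc j (by omega)).le)
            (hbnd (j+1) (by omega)))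
          (fun j h1 h2 => hminF j h2 (by omega))
        simpa only [hx0] using hch
      have hchain2 : gdist (emulGraph G w A pv k) (gdist G w) (q.getVert (f (je+1))) (y) ≤ ENNReal.ofReal (1 + 4 * (i:ℕ) / (Δ - 3)) * gdist G w (q.getVert (f (je+1))) (y) := by
        have hch := chain_lemma (H := emulGraph G w A pv k) (wH := gdist G w)
          (ENNReal.ofReal (1 + 4 * (i:ℕ) / (Δ - 3))) (fun j => q.getVert (f j)) (je+1) m (by omega)
          (fun j h1 h2 => hgadd (f (je+1)) (f j) (f (j+1))
            (hfmono (je+1) j h1 (by omega)) ((hinc j h2).le)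
            (hbnd (j+1) (by omega)))
          (fun j h1 h2 => hmaxF j (by omega) h2)
        simpa only [hym] using hch
      -- position sums
      have e1 : gdist G w (x) (q.getVert (f js)) + gdist G w (q.getVert (f js)) (q.getVert (f (je+1))) = gdist G w (x) (q.getVert (f (je+1))) := by
        have := hgadd (f 0) (f js) (f (je+1))
          (hfmono 0 js (by omega) (by omega))
          (hfmono js (je+1) (by omega) (by omega)) (hbnd (je+1) (by omega))
        rwa [hx0] at this
      have e2 : gdist G w (x) (q.getVert (f (je+1))) + gdist G w (q.getVert (f (je+1))) (y) = gdist G w x y := by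
        have := hgadd (f 0) (f (je+1)) (f m)
          (hfmono 0 (je+1) (by omega) (by omega))
          (hfmono (je+1) m (by omega) le_rfl) (hbnd m le_rfl)
        rwa [hx0, hym] at this
      have hsum : gdist G w (x) (q.getVert (f js)) + gdist G w (q.getVert (f js)) (q.getVert (f (je+1))) + gdist G w (q.getVert (f (je+1))) (y) = gdist G w x y := by
        rw [e1, e2]
      by_cases hclose : ∃ a ∈ A (i + 1 + 1),
          gdist G w x a ≤ ENNReal.ofReal (Δ / (Δ - 3)) * gdist G w x y
      · obtain ⟨a, ha, hale⟩ := hclose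
        right
        have hne2 : (A (i + 1 + 1)).Nonempty := ⟨a, ha⟩
        have hk2 : i + 1 + 1 < k := mem_lt_k hAnest hAk ha
        refine ⟨hne2, ?_⟩
        calc gdist (emulGraph G w A pv k) (gdist G w) x (pv (i + 1 + 1) x)
            ≤ gdist G w x (pv (i + 1 + 1) x) := dH_pivot_le hA0 hAnest hAk hpv hne2 hxin
        _ ≤ gdist G w x a := (hpv _ hk2 x hne2).2 a ha
        _ ≤ ENNReal.ofReal (Δ / (Δ - 3)) * gdist G w x y := hale
      · push_neg at hclose
        left
        have hp_mem : (pv (i+1) (q.getVert (f js))) ∈ A (i + 1) := (hpv (i+1) hik _ hAne).1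
        have hp'_mem : (pv (i+1) (q.getVert (f (je+1)))) ∈ A (i + 1) := (hpv (i+1) hik _ hAne).1
        have hgxp : gdist G w (x) (pv (i+1) (q.getVert (f js))) ≤ gdist G w (x) (q.getVert (f js)) + ENNReal.ofReal (Δ / (Δ - 3)) * (3 * T) :=
          gdist_triangle.trans (add_le_add le_rfl hgzp)
        have hxzleD : gdist G w (x) (q.getVert (f js)) + gdist G w (q.getVert (f js)) (q.getVert (f (je+1))) ≤ gdist G w x y := by
          rw [← hsum]
          exact le_self_add
        have hABle : gdist G w (x) (q.getVert (f js)) + ENNReal.ofReal (Δ / (Δ - 3)) * (3 * T) ≤ ENNReal.ofReal (Δ / (Δ - 3)) * gdist G w x y := by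
          calc gdist G w (x) (q.getVert (f js)) + ENNReal.ofReal (Δ / (Δ - 3)) * (3 * T)
              ≤ gdist G w x y + (ENNReal.ofReal (Δ / (Δ - 3)) * (3 * T)) * 3 := by
                refine add_le_add ?_ (le_mul_of_one_le_right (zero_le) (by norm_num))
                calc gdist G w (x) (q.getVert (f js)) ≤ gdist G w (x) (q.getVert (f js)) + gdist G w (q.getVert (f js)) (q.getVert (f (je+1))) := le_self_add
                _ ≤ gdist G w x y := hxzleD
          _ ≤ ENNReal.ofReal (Δ / (Δ - 3)) * gdist G w x y := arith2 hΔ hDfin h3DT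
        have hpnotin : (pv (i+1) (q.getVert (f js))) ∉ A (i + 1 + 1) := by
          intro hmem
          exact absurd (hgxp.trans hABle) (hclose _ hmem).not_ge
        have hppbd : gdist G w (pv (i+1) (q.getVert (f js))) (pv (i+1) (q.getVert (f (je+1)))) ≤ ENNReal.ofReal (Δ / (Δ - 3)) * (3 * T) + gdist G w (q.getVert (f js)) (q.getVert (f (je+1))) + ENNReal.ofReal (Δ / (Δ - 3)) * (3 * T) := by
          calc gdist G w (pv (i+1) (q.getVert (f js))) (pv (i+1) (q.getVert (f (je+1)))) ≤ gdist G w (pv (i+1) (q.getVert (f js))) (q.getVert (f js)) + gdist G w (q.getVert (f js)) (pv (i+1) (q.getVert (f (je+1)))) := gdist_triangle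
          _ ≤ gdist G w (pv (i+1) (q.getVert (f js))) (q.getVert (f js)) + (gdist G w (q.getVert (f js)) (q.getVert (f (je+1))) + gdist G w (q.getVert (f (je+1))) (pv (i+1) (q.getVert (f (je+1))))) := add_le_add le_rfl gdist_triangle
          _ = gdist G w (q.getVert (f js)) (pv (i+1) (q.getVert (f js))) + gdist G w (q.getVert (f js)) (q.getVert (f (je+1))) + gdist G w (q.getVert (f (je+1))) (pv (i+1) (q.getVert (f (je+1)))) := by
              have hpz : gdist G w (pv (i+1) (q.getVert (f js))) (q.getVert (f js)) = gdist G w (q.getVert (f js)) (pv (i+1) (q.getVert (f js))) := gdist_symm hwsym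
              rw [hpz, ← add_assoc]
          _ ≤ ENNReal.ofReal (Δ / (Δ - 3)) * (3 * T) + gdist G w (q.getVert (f js)) (q.getVert (f (je+1))) + ENNReal.ofReal (Δ / (Δ - 3)) * (3 * T) := add_le_add (add_le_add hgzp le_rfl) hgz'p'
        have hbunchcond : ∀ a ∈ A (i + 1 + 1), gdist G w (pv (i+1) (q.getVert (f js))) (pv (i+1) (q.getVert (f (je+1)))) < gdist G w (pv (i+1) (q.getVert (f js))) a := by
          intro a ha
          by_contra hc
          push_neg at hc
          have h2 : gdist G w x a ≤ gdist G w (x) (pv (i+1) (q.getVert (f js))) + gdist G w (pv (i+1) (q.getVert (f js))) a := gdist_triangle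
          have h4 : gdist G w (x) (pv (i+1) (q.getVert (f js))) + gdist G w (pv (i+1) (q.getVert (f js))) a ≤ ENNReal.ofReal (Δ / (Δ - 3)) * gdist G w x y := by
            calc gdist G w (x) (pv (i+1) (q.getVert (f js))) + gdist G w (pv (i+1) (q.getVert (f js))) a
                ≤ (gdist G w (x) (q.getVert (f js)) + ENNReal.ofReal (Δ / (Δ - 3)) * (3 * T)) + (ENNReal.ofReal (Δ / (Δ - 3)) * (3 * T) + gdist G w (q.getVert (f js)) (q.getVert (f (je+1))) + ENNReal.ofReal (Δ / (Δ - 3)) * (3 * T)) :=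
                  add_le_add hgxp (hc.trans hppbd)
            _ = (gdist G w (x) (q.getVert (f js)) + gdist G w (q.getVert (f js)) (q.getVert (f (je+1)))) + (ENNReal.ofReal (Δ / (Δ - 3)) * (3 * T)) * 3 := by ring
            _ ≤ gdist G w x y + (ENNReal.ofReal (Δ / (Δ - 3)) * (3 * T)) * 3 := add_le_add hxzleD le_rfl
            _ ≤ ENNReal.ofReal (Δ / (Δ - 3)) * gdist G w x y := arith2 hΔ hDfin h3DT
          exact absurd (h2.trans h4) (hclose a ha).not_ge
        have hdpp : gdist (emulGraph G w A pv k) (gdist G w) (pv (i+1) (q.getVert (f js))) (pv (i+1) (q.getVert (f (je+1)))) ≤ ENNReal.ofReal (Δ / (Δ - 3)) * (3 * T) + gdist G w (q.getVert (f js)) (q.getVert (f (je+1))) + ENNReal.ofReal (Δ / (Δ - 3)) * (3 * T) := by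
          rcases eq_or_ne (pv (i+1) (q.getVert (f js))) (pv (i+1) (q.getVert (f (je+1)))) with heq | hpne
          · rw [heq, gdist_self]
            exact zero_le
          · exact (gdist_le_w (edge_bunch hp_mem hpnotin hp'_mem hpne hbunchcond)).trans hppbd
        have hdpz' : gdist (emulGraph G w A pv k) (gdist G w) (pv (i+1) (q.getVert (f (je+1)))) (q.getVert (f (je+1))) ≤ ENNReal.ofReal (Δ / (Δ - 3)) * (3 * T) := by
          rw [dH_symm hwsym]
          exact hz'p3
        -- final assembly
        calc gdist (emulGraph G w A pv k) (gdist G w) x y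
            ≤ gdist (emulGraph G w A pv k) (gdist G w) (x) (q.getVert (f js)) + gdist (emulGraph G w A pv k) (gdist G w) (q.getVert (f js)) (y) := gdist_triangle
        _ ≤ gdist (emulGraph G w A pv k) (gdist G w) (x) (q.getVert (f js)) + (gdist (emulGraph G w A pv k) (gdist G w) (q.getVert (f js)) (pv (i+1) (q.getVert (f js))) + gdist (emulGraph G w A pv k) (gdist G w) (pv (i+1) (q.getVert (f js))) (y)) := add_le_add le_rfl gdist_triangle
        _ ≤ gdist (emulGraph G w A pv k) (gdist G w) (x) (q.getVert (f js)) + (gdist (emulGraph G w A pv k) (gdist G w) (q.getVert (f js)) (pv (i+1) (q.getVert (f js))) + (gdist (emulGraph G w A pv k) (gdist G w) (pv (i+1) (q.getVert (f js))) (pv (i+1) (q.getVert (f (je+1)))) + gdist (emulGraph G w A pv k) (gdist G w) (pv (i+1) (q.getVert (f (je+1)))) (y))) :=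
            add_le_add le_rfl (add_le_add le_rfl gdist_triangle)
        _ ≤ gdist (emulGraph G w A pv k) (gdist G w) (x) (q.getVert (f js)) + (gdist (emulGraph G w A pv k) (gdist G w) (q.getVert (f js)) (pv (i+1) (q.getVert (f js))) + (gdist (emulGraph G w A pv k) (gdist G w) (pv (i+1) (q.getVert (f js))) (pv (i+1) (q.getVert (f (je+1)))) + (gdist (emulGraph G w A pv k) (gdist G w) (pv (i+1) (q.getVert (f (je+1)))) (q.getVert (f (je+1))) + gdist (emulGraph G w A pv k) (gdist G w) (q.getVert (f (je+1))) (y)))) :=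
            add_le_add le_rfl (add_le_add le_rfl (add_le_add le_rfl gdist_triangle))
        _ ≤ ENNReal.ofReal (1 + 4 * (i:ℕ) / (Δ - 3)) * gdist G w (x) (q.getVert (f js)) + (ENNReal.ofReal (Δ / (Δ - 3)) * (3 * T) + ((ENNReal.ofReal (Δ / (Δ - 3)) * (3 * T) + gdist G w (q.getVert (f js)) (q.getVert (f (je+1))) + ENNReal.ofReal (Δ / (Δ - 3)) * (3 * T)) +
              (ENNReal.ofReal (Δ / (Δ - 3)) * (3 * T) + ENNReal.ofReal (1 + 4 * (i:ℕ) / (Δ - 3)) * gdist G w (q.getVert (f (je+1))) (y)))) :=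
            add_le_add hchain1 (add_le_add hzp3 (add_le_add hdpp
              (add_le_add hdpz' hchain2)))
        _ = (ENNReal.ofReal (1 + 4 * (i:ℕ) / (Δ - 3)) * gdist G w (x) (q.getVert (f js)) + ENNReal.ofReal (1 + 4 * (i:ℕ) / (Δ - 3)) * gdist G w (q.getVert (f (je+1))) (y) + gdist G w (q.getVert (f js)) (q.getVert (f (je+1)))) + (ENNReal.ofReal (Δ / (Δ - 3)) * (3 * T)) * 4 := by
            ring
        _ ≤ (ENNReal.ofReal (1 + 4 * (i:ℕ) / (Δ - 3)) * gdist G w (x) (q.getVert (f js)) + ENNReal.ofReal (1 + 4 * (i:ℕ) / (Δ - 3)) * gdist G w (q.getVert (f (je+1))) (y) + ENNReal.ofReal (1 + 4 * (i:ℕ) / (Δ - 3)) * gdist G w (q.getVert (f js)) (q.getVert (f (je+1)))) + (ENNReal.ofReal (Δ / (Δ - 3)) * (3 * T)) * 4 :=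
            add_le_add (add_le_add le_rfl (le_mul_of_one_le_left (zero_le) hc'1)) le_rfl
        _ = ENNReal.ofReal (1 + 4 * (i:ℕ) / (Δ - 3)) * (gdist G w (x) (q.getVert (f js)) + gdist G w (q.getVert (f js)) (q.getVert (f (je+1))) + gdist G w (q.getVert (f (je+1))) (y)) + (ENNReal.ofReal (Δ / (Δ - 3)) * (3 * T)) * 4 := by
            ring
        _ = ENNReal.ofReal (1 + 4 * (i:ℕ) / (Δ - 3)) * gdist G w x y + (ENNReal.ofReal (Δ / (Δ - 3)) * (3 * T)) * 4 := by rw [hsum]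
        _ ≤ ENNReal.ofReal (1 + 4 * ((i+1:ℕ)) / (Δ - 3)) * gdist G w x y :=
            arith3 hΔ i hDfin h3DT

end mainsec


/-- Lemma 3.1: for `x, y` with `d_G(x,y) ≥ (3Δ)^i · W(x,y)`, either
`d_H(x,y) ≤ (1 + 4i/(Δ-3)) d_G(x,y)`, or `A_{i+1} ≠ ∅` and
`d_H(x, p_{i+1}(x)) ≤ (Δ/(Δ-3)) d_G(x,y)`. -/
theorem statement0 [Fintype V] (G : SimpleGraph V) (hconn : G.Connected)
    (w : V → V → ℝ≥0∞) (hwsym : ∀ u v, G.Adj u v → w u v = w v u)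
    (hwfin : ∀ u v, G.Adj u v → w u v ≠ ⊤)
    (k : ℕ) (hk : 1 ≤ k) (A : ℕ → Set V) (hA0 : A 0 = Set.univ)
    (hAnest : ∀ i, A (i + 1) ⊆ A i) (hAk : A k = ∅)
    (pv : ℕ → V → V)
    (hpv : ∀ i, i < k → ∀ v : V, (A i).Nonempty →
      pv i v ∈ A i ∧ ∀ a ∈ A i, gdist G w v (pv i v) ≤ gdist G w v a)
    (Δ : ℝ) (hΔ : 3 < Δ) (i : ℕ) (hi : i < k) (x y : V) (Wxy : ℝ≥0∞)
    (hW : ∃ q : G.Walk x y, q.IsPath ∧ wWeight w q = gdist G w x y ∧ maxW w q = Wxy)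
    (hfar : ENNReal.ofReal ((3 * Δ) ^ i) * Wxy ≤ gdist G w x y) :
    gdist (emulGraph G w A pv k) (gdist G w) x y ≤
        ENNReal.ofReal (1 + 4 * i / (Δ - 3)) * gdist G w x y ∨
      ((A (i + 1)).Nonempty ∧
        gdist (emulGraph G w A pv k) (gdist G w) x (pv (i + 1) x) ≤
          ENNReal.ofReal (Δ / (Δ - 3)) * gdist G w x y) :=
  mainlem G w hwsym hwfin k A hA0 hAnest hAk pv hpv Δ hΔ i x y Wxy hW hfar

end ASP
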